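/- Let (Ω, μ) be a probability measure space and let p > 1 be a real number. Let f : Ω → ℝ be a nonnegative function with f ∈ L^p(μ) ∩ L^1(μ) and ∫_Ω f dμ > 0. Then (1/(p−1)) · ( (∫_Ω f^p dμ) / (∫_Ω f dμ)^p − 1 ) ≥ (1/2) · ( ∫_Ω | f/(∫_Ω f dμ) − 1 | dμ )². -/

import Mathlib

open MeasureTheory Real
open Set

-- log t ≥ 1 - 1/t for t > 0
lemma log_ge_one_sub_inv {t : ℝ} (ht : 0 < t) : 1 - 1/t ≤ Real.log t := by
  have h := Real.log_le_sub_one_of_pos (show (0:ℝ) < 1/t by positivity)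
  rw [Real.log_div one_ne_zero ht.ne', Real.log_one] at h
  linarith

-- Step B': (t+1) log t - 2(t-1) sign analysis
lemma r_mono : MonotoneOn (fun t : ℝ => (t+1) * Real.log t - 2*(t-1)) (Ioi 0) := by
  have hd : ∀ t ∈ Ioi (0:ℝ), HasDerivAt (fun t : ℝ => (t+1) * Real.log t - 2*(t-1))
      (Real.log t + (t+1) * t⁻¹ - 2) t := by
    intro t ht
    have h1 : HasDerivAt (fun t : ℝ => (t+1) * Real.log t)
        (1 * Real.log t + (t+1) * t⁻¹) t :=
      ((hasDerivAt_id t).add_const 1).mul (Real.hasDerivAt_log (ne_of_gt ht))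
    have h2 : HasDerivAt (fun t : ℝ => 2*(t-1)) 2 t := by
      simpa using ((hasDerivAt_id t).sub_const 1).const_mul 2
    exact (h1.sub h2).congr_deriv (by ring)
  have hint : interior (Ioi (0:ℝ)) = Ioi 0 := interior_Ioi
  apply monotoneOn_of_deriv_nonneg (convex_Ioi 0)
  · intro t ht
    exact ((hd t ht).continuousAt).continuousWithinAt
  · rw [hint]; intro t ht; exact (hd t ht).differentiableAt.differentiableWithinAt
  · rw [hint]; intro t ht
    rw [(hd t ht).deriv]
    have hl := log_ge_one_sub_inv ht
    have : (t+1) * t⁻¹ = 1 + 1/t := by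
      rw [add_mul, mul_inv_cancel₀ (ne_of_gt ht)]; norm_num
    rw [this]
    linarith

-- Step B: 3(t-1)^2 ≤ 2(t+2)(t log t - t + 1) for t > 0
lemma stepB {t : ℝ} (ht : 0 < t) :
    3*(t-1)^2 ≤ 2*(t+2)*(t*Real.log t - t + 1) := by
  set q : ℝ → ℝ := fun t => 2*(t+2)*(t*Real.log t - t + 1) - 3*(t-1)^2 with hq
  have hd : ∀ s ∈ Ioi (0:ℝ), HasDerivAt q (4*((s+1) * Real.log s - 2*(s-1))) s := by
    intro s hs
    have hs0 : s ≠ 0 := ne_of_gt hs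
    have h1 : HasDerivAt (fun t : ℝ => t * Real.log t) (1 * Real.log s + s * s⁻¹) s :=
      (hasDerivAt_id s).mul (Real.hasDerivAt_log hs0)
    have h2 : HasDerivAt (fun t : ℝ => t * Real.log t - t + 1)
        (1 * Real.log s + s * s⁻¹ - 1) s := (h1.sub (hasDerivAt_id s)).add_const 1
    have h3 : HasDerivAt (fun t : ℝ => 2*(t+2)) 2 s := by
      simpa using ((hasDerivAt_id s).add_const 2).const_mul 2
    have h4 : HasDerivAt (fun t : ℝ => 2*(t+2)*(t*Real.log t - t + 1))
        (2 * (s*Real.log s - s + 1) + 2*(s+2) * (1 * Real.log s + s * s⁻¹ - 1)) s :=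
      h3.mul h2
    have h5 : HasDerivAt (fun t : ℝ => 3*(t-1)^2) (3*(2*(s-1))) s := by
      have := (((hasDerivAt_id s).sub_const 1).pow 2).const_mul 3
      simpa using this
    have h6 := h4.sub h5
    have he : 2 * (s*Real.log s - s + 1) + 2*(s+2) * (1 * Real.log s + s * s⁻¹ - 1)
        - 3*(2*(s-1)) = 4*((s+1) * Real.log s - 2*(s-1)) := by
      rw [mul_inv_cancel₀ hs0]; ring
    rw [← he]; exact h6
  have hq1 : q 1 = 0 := by simp [hq]
  have key : ∀ s ∈ Ioi (0:ℝ), 0 ≤ q s := by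
    intro s hs
    rcases le_total s 1 with h | h
    · -- antitone on [s,1]
      have hanti : AntitoneOn q (Icc s 1) := by
        apply antitoneOn_of_deriv_nonpos (convex_Icc s 1)
        · intro x hx
          exact ((hd x (lt_of_lt_of_le hs hx.1)).continuousAt).continuousWithinAt
        · rw [interior_Icc]; intro x hx
          exact (hd x (lt_of_lt_of_le hs hx.1.le)).differentiableAt.differentiableWithinAt
        · rw [interior_Icc]; intro x hx
          have hx0 : 0 < x := lt_of_lt_of_le hs hx.1.le
          rw [(hd x hx0).deriv]
          have := r_mono hx0 (by norm_num : (1:ℝ) ∈ Ioi 0) hx.2.le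
          simp only [Real.log_one] at this
          nlinarith
      have := hanti (left_mem_Icc.2 h) (right_mem_Icc.2 h) h
      rw [hq1] at this; linarith
    · -- monotone on [1,s]
      have hmono : MonotoneOn q (Icc 1 s) := by
        apply monotoneOn_of_deriv_nonneg (convex_Icc 1 s)
        · intro x hx
          exact ((hd x (lt_of_lt_of_le one_pos hx.1)).continuousAt).continuousWithinAt
        · rw [interior_Icc]; intro x hx
          exact (hd x (lt_of_lt_of_le one_pos hx.1.le)).differentiableAt.differentiableWithinAt
        · rw [interior_Icc]; intro x hx
          have hx0 : 0 < x := lt_of_lt_of_le one_pos hx.1.le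
          rw [(hd x hx0).deriv]
          have := r_mono (by norm_num : (1:ℝ) ∈ Ioi 0) hx0 hx.1.le
          simp only [Real.log_one] at this
          nlinarith
      have := hmono (left_mem_Icc.2 h) (right_mem_Icc.2 h) h
      rw [hq1] at this; linarith
  have := key t ht
  simp only [hq] at this; linarith

-- Step A: for t > 0, 1 ≤ p: (p-1)(t log t - t + 1) ≤ t^p - 1 - p(t-1)
lemma stepA {t p : ℝ} (ht : 0 < t) (hp : 1 ≤ p) :
    (p-1)*(t*Real.log t - t + 1) ≤ t ^ p - 1 - p*(t-1) := by
  set F : ℝ → ℝ := fun s => t ^ s - 1 - s*(t-1) - (s-1)*(t*Real.log t - t + 1) with hF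
  have hd : ∀ s : ℝ, HasDerivAt F (t ^ s * Real.log t - (t-1) - (t*Real.log t - t + 1)) s := by
    intro s
    have h1 : HasDerivAt (fun s : ℝ => t ^ s) (t ^ s * Real.log t) s :=
      (Real.hasStrictDerivAt_const_rpow ht s).hasDerivAt
    have h2 : HasDerivAt (fun s : ℝ => s*(t-1)) (t-1) s := by
      simpa using (hasDerivAt_id s).mul_const (t-1)
    have h3 : HasDerivAt (fun s : ℝ => (s-1)*(t*Real.log t - t + 1))
        (t*Real.log t - t + 1) s := by
      simpa using ((hasDerivAt_id s).sub_const 1).mul_const (t*Real.log t - t + 1)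
    exact (((h1.sub_const 1).sub h2).sub h3).congr_deriv (by ring)
  have hmono : MonotoneOn F (Ici 1) := by
    apply monotoneOn_of_deriv_nonneg (convex_Ici 1)
    · exact fun x _ => ((hd x).continuousAt).continuousWithinAt
    · rw [interior_Ici]; exact fun x _ => (hd x).differentiableAt.differentiableWithinAt
    · rw [interior_Ici]; intro s hs
      rw [(hd s).deriv]
      have he : t ^ s * Real.log t - (t-1) - (t*Real.log t - t + 1)
          = (t ^ s - t) * Real.log t := by ring
      rw [he]
      rcases le_total t 1 with h | h
      · have hts : t ^ s ≤ t := by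
          calc t ^ s ≤ t ^ (1:ℝ) := Real.rpow_le_rpow_of_exponent_ge ht h (le_of_lt hs)
          _ = t := Real.rpow_one t
        have hlog : Real.log t ≤ 0 := Real.log_nonpos ht.le h
        nlinarith [mul_nonneg (show (0:ℝ) ≤ t - t ^ s by linarith) (show (0:ℝ) ≤ -Real.log t by linarith)]
      · have hts : t ≤ t ^ s := by
          calc t = t ^ (1:ℝ) := (Real.rpow_one t).symm
          _ ≤ t ^ s := Real.rpow_le_rpow_of_exponent_le h (le_of_lt hs)
        have hlog : 0 ≤ Real.log t := Real.log_nonneg h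
        exact mul_nonneg (by linarith) hlog
  have hF1 : F 1 = 0 := by simp [hF]
  have := hmono (self_mem_Ici) (mem_Ici.2 hp) hp
  rw [hF1] at this
  simp only [hF] at this
  linarith

-- Key pointwise inequality
lemma key_ptwise {t p : ℝ} (ht : 0 ≤ t) (hp : 1 ≤ p) :
    3*(p-1)*(t-1)^2 ≤ 2*(t+2)*(t ^ p - 1 - p*(t-1)) := by
  rcases eq_or_lt_of_le ht with h0 | h0
  · rw [← h0, Real.zero_rpow (by linarith : p ≠ 0)]
    nlinarith
  · have hB := stepB h0
    have hA := stepA h0 hp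
    have hK : 0 ≤ t*Real.log t - t + 1 := by nlinarith
    nlinarith [mul_nonneg (show (0:ℝ) ≤ p - 1 by linarith) hK,
      mul_le_mul_of_nonneg_left hA (show (0:ℝ) ≤ 2*(t+2) by linarith),
      mul_le_mul_of_nonneg_left hB (show (0:ℝ) ≤ p-1 by linarith)]

-- Main auxiliary theorem for normalized g
lemma main_aux {Ω : Type*} [MeasurableSpace Ω] (μ : Measure Ω) [IsProbabilityMeasure μ]
    (p : ℝ) (hp : 1 < p) (g : Ω → ℝ) (hg0 : ∀ x, 0 ≤ g x)
    (hgp : Integrable (fun x => g x ^ p) μ) (hg1 : Integrable g μ)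
    (hmean : ∫ x, g x ∂μ = 1) :
    (1/2) * (∫ x, |g x - 1| ∂μ) ^ 2 ≤ (1/(p-1)) * ((∫ x, g x ^ p ∂μ) - 1) := by
  have hp1 : (0:ℝ) < p - 1 := by linarith
  set u : Ω → ℝ := fun x => (g x - 1)^2 / (g x + 2) with hu
  have hg2 : ∀ x, (0:ℝ) < g x + 2 := fun x => by linarith [hg0 x]
  have hu0 : ∀ x, 0 ≤ u x := fun x => div_nonneg (sq_nonneg _) (hg2 x).le
  have hu_le : ∀ x, u x ≤ |g x - 1| := by
    intro x
    rw [hu, div_le_iff₀ (hg2 x)]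
    have h1 : |g x - 1| ≤ g x + 2 := abs_le.2 ⟨by linarith [hg0 x], by linarith [hg0 x]⟩
    nlinarith [sq_abs (g x - 1), abs_nonneg (g x - 1)]
  have habs : Integrable (fun x => |g x - 1|) μ := (hg1.sub (integrable_const 1)).abs
  have hum : AEStronglyMeasurable u μ := by
    have hgm := hg1.aestronglyMeasurable.aemeasurable
    exact (((hgm.sub aemeasurable_const).pow_const 2).div
      (hgm.add aemeasurable_const)).aestronglyMeasurable
  have hu_int : Integrable u μ := by
    apply habs.mono' hum
    filter_upwards with x
    rw [Real.norm_of_nonneg (hu0 x)]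
    exact hu_le x
  -- E : divergence integrand
  set E : Ω → ℝ := fun x => g x ^ p - 1 - p*(g x - 1) with hE
  have hE_int : Integrable E μ :=
    (hgp.sub (integrable_const 1)).sub ((hg1.sub (integrable_const 1)).const_mul p)
  have hgm1_int : Integrable (fun x => g x - 1) μ := hg1.sub (integrable_const 1)
  have hgm1 : ∫ x, (g x - 1) ∂μ = 0 := by
    rw [integral_sub hg1 (integrable_const 1)]
    simp [hmean]
  have hD_val : ∫ x, E x ∂μ = (∫ x, g x ^ p ∂μ) - 1 := by
    rw [hE]
    simp only [sub_sub]
    rw [integral_sub hgp (by exact (integrable_const 1).add (hgm1_int.const_mul p))]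
    rw [integral_add (integrable_const 1) (hgm1_int.const_mul p)]
    rw [integral_const_mul, hgm1]
    simp
  set D := (∫ x, g x ^ p ∂μ) - 1 with hD
  set U := ∫ x, u x ∂μ with hUdef
  set T := ∫ x, |g x - 1| ∂μ with hTdef
  have hU0 : 0 ≤ U := integral_nonneg hu0
  have hT0 : 0 ≤ T := integral_nonneg (fun x => abs_nonneg _)
  -- 3(p-1) U ≤ 2 D
  have hUD : 3*(p-1)*U ≤ 2*D := by
    rw [hUdef, ← hD_val, ← integral_const_mul, ← integral_const_mul]
    apply integral_mono (hu_int.const_mul _) (hE_int.const_mul 2)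
    intro x
    have hk := key_ptwise (hg0 x) hp.le
    simp only [hu, hE]
    rw [show 3*(p-1)*((g x - 1)^2/(g x + 2)) = 3*(p-1)*(g x - 1)^2/(g x + 2) by ring]
    rw [div_le_iff₀ (hg2 x)]
    nlinarith [hk]
  -- D ≥ 0
  have hD0 : 0 ≤ D := by nlinarith
  rcases eq_or_lt_of_le hT0 with hT | hT
  · rw [← hT]
    norm_num
    exact mul_nonneg (by positivity) hD0
  · -- AM-GM with λ = T/3
    set l := T/3 with hl
    have hl0 : 0 < l := by positivity
    have hTU : 2*l*T ≤ U + 3*l^2 := by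
      have hptw : ∀ x, 2*l*|g x - 1| ≤ u x + l^2*(g x + 2) := by
        intro x
        have h2 := hg2 x
        have : 2*l*|g x - 1| - l^2*(g x + 2) ≤ u x := by
          rw [hu, le_div_iff₀ h2]
          nlinarith [sq_nonneg (|g x - 1| - l*(g x + 2)), sq_abs (g x - 1)]
        linarith
      have hg2_int : Integrable (fun x => g x + 2) μ := hg1.add (integrable_const 2)
      have hmono := integral_mono (μ := μ)
        (f := fun x => 2*l*|g x - 1|) (g := fun x => u x + l^2*(g x + 2))
        (habs.const_mul (2*l)) (hu_int.add (hg2_int.const_mul (l^2))) hptw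
      rw [integral_const_mul, integral_add hu_int (hg2_int.const_mul (l^2)),
        integral_const_mul, integral_add hg1 (integrable_const 2)] at hmono
      simp only [integral_const, measure_univ, ENNReal.toReal_one, smul_eq_mul, one_mul,
        hmean, probReal_univ] at hmono
      rw [← hTdef, ← hUdef] at hmono
      nlinarith
    -- conclude: T^2 ≤ 3U
    have hT2 : T^2 ≤ 3*U := by
      rw [hl] at hTU
      nlinarith
    -- (p-1) T^2 ≤ 2D
    rw [show (1:ℝ)/(p-1)*D = D/(p-1) by ring, le_div_iff₀ hp1]
    nlinarith [mul_le_mul_of_nonneg_left hT2 hp1.le, hUD]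

theorem stmt_0 {Ω : Type*} [MeasurableSpace Ω] (μ : Measure Ω) [IsProbabilityMeasure μ]
    (p : ℝ) (hp : 1 < p) (f : Ω → ℝ) (hf0 : ∀ x, 0 ≤ f x)
    (hfp : Integrable (fun x => f x ^ p) μ) (hf1 : Integrable f μ)
    (hpos : 0 < ∫ x, f x ∂μ) :
    (1 / (p - 1)) * ((∫ x, f x ^ p ∂μ) / (∫ x, f x ∂μ) ^ p - 1) ≥
      (1 / 2) * (∫ x, |f x / (∫ y, f y ∂μ) - 1| ∂μ) ^ 2 := by
  set I := ∫ x, f x ∂μ with hI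
  have hg0 : ∀ x, 0 ≤ f x / I := fun x => div_nonneg (hf0 x) hpos.le
  have hg1 : Integrable (fun x => f x / I) μ := hf1.div_const I
  have hmean : ∫ x, f x / I ∂μ = 1 := by
    rw [integral_div, div_self hpos.ne']
  have hgp_eq : ∀ x, (f x / I) ^ p = f x ^ p / I ^ p := fun x =>
    Real.div_rpow (hf0 x) hpos.le p
  have hgp : Integrable (fun x => (f x / I) ^ p) μ :=
    (hfp.div_const (I ^ p)).congr (Filter.Eventually.of_forall fun x => (hgp_eq x).symm)
  have hintgp : ∫ x, (f x / I) ^ p ∂μ = (∫ x, f x ^ p ∂μ) / I ^ p := by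
    simp_rw [hgp_eq]
    exact integral_div _ _
  have := main_aux μ p hp (fun x => f x / I) hg0 hgp hg1 hmean
  rw [hintgp] at this
  exact this
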